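/- For a twice continuously differentiable function Ḡ: (0,∞) → ℝ with Ḡ'' = g continuous, and any two points F₀, F > 0, one has Ḡ(F) - Ḡ(F₀) = Ḡ'(F₀)(F - F₀) + ∫₀^{F₀} g(k)·max(k - F, 0) dk + ∫_{F₀}^∞ g(k)·max(F - k, 0) dk, provided the integrals converge (e.g., g has compact support or the payoff-weighted integrals are finite). -/

import Mathlib

open MeasureTheory

lemma key_taylor (G g G' : ℝ → ℝ)
    (hG' : ∀ x ∈ Set.Ioi (0:ℝ), HasDerivAt G (G' x) x)
    (hG'' : ∀ x ∈ Set.Ioi (0:ℝ), HasDerivAt G' (g x) x)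
    (hg : ContinuousOn g (Set.Ioi 0))
    (F₀ F : ℝ) (hF₀ : 0 < F₀) (hF : 0 < F) :
    ∫ k in F₀..F, g k * (F - k) = G F - G F₀ - G' F₀ * (F - F₀) := by
  have hsub : Set.uIcc F₀ F ⊆ Set.Ioi 0 := fun x hx =>
    lt_of_lt_of_le (lt_min hF₀ hF) hx.1
  have hderiv : ∀ x ∈ Set.uIcc F₀ F,
      HasDerivAt (fun k => G' k * (F - k) + G k) (g x * (F - x)) x := by
    intro x hx
    have hx0 := hsub hx
    have h1 : HasDerivAt (fun y : ℝ => F - y) (-1) x := by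
      simpa using (hasDerivAt_id x).const_sub F
    have h2 := ((hG'' x hx0).mul h1).add (hG' x hx0)
    exact h2.congr_deriv (by ring)
  have hint : IntervalIntegrable (fun k => g k * (F - k)) volume F₀ F :=
    ((hg.mono hsub).mul (continuousOn_const.sub continuousOn_id)).intervalIntegrable
  have h := intervalIntegral.integral_eq_sub_of_hasDerivAt hderiv hint
  rw [h]; ring

theorem stmt0 (G g G' : ℝ → ℝ)
    (hG' : ∀ x ∈ Set.Ioi (0:ℝ), HasDerivAt G (G' x) x)
    (hG'' : ∀ x ∈ Set.Ioi (0:ℝ), HasDerivAt G' (g x) x)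
    (hg : ContinuousOn g (Set.Ioi 0))
    (F₀ F : ℝ) (hF₀ : 0 < F₀) (hF : 0 < F)
    (hint1 : IntervalIntegrable (fun k => g k * max (k - F) 0) volume 0 F₀)
    (hint2 : IntegrableOn (fun k => g k * max (F - k) 0) (Set.Ioi F₀)) :
    G F - G F₀ = G' F₀ * (F - F₀)
      + (∫ k in (0:ℝ)..F₀, g k * max (k - F) 0)
      + ∫ k in Set.Ioi F₀, g k * max (F - k) 0 := by
  have key := key_taylor G g G' hG' hG'' hg F₀ F hF₀ hF
  rcases le_or_gt F₀ F with hle | hlt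
  · -- F₀ ≤ F : put integral is 0, call integral equals ∫_{F₀}^F g (F-k)
    have h1 : (∫ k in (0:ℝ)..F₀, g k * max (k - F) 0) = 0 := by
      rw [intervalIntegral.integral_congr (g := fun _ => (0:ℝ))]
      · simp
      · intro x hx
        have hx2 : x ≤ F := le_trans (hx.2.trans_eq (by simp [hF₀.le])) hle
        simp [max_eq_right (sub_nonpos.2 hx2)]
    have hsplit : (∫ k in Set.Ioi F₀, g k * max (F - k) 0)
        = (∫ k in Set.Ioc F₀ F, g k * max (F - k) 0)
          + ∫ k in Set.Ioi F, g k * max (F - k) 0 := by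
      rw [← setIntegral_union (Set.Ioc_disjoint_Ioi le_rfl) measurableSet_Ioi
          (hint2.mono_set (by intro x hx; exact hx.1))
          (hint2.mono_set (fun x hx => lt_of_le_of_lt hle hx)),
        Set.Ioc_union_Ioi_eq_Ioi hle]
    have hz : (∫ k in Set.Ioi F, g k * max (F - k) 0) = 0 := by
      rw [setIntegral_congr_fun measurableSet_Ioi
        (g := fun _ => (0:ℝ)) (fun x hx => by
          simp [max_eq_right (sub_nonpos.2 (le_of_lt (Set.mem_Ioi.1 hx)))])]
      simp
    have hmain : (∫ k in Set.Ioc F₀ F, g k * max (F - k) 0)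
        = ∫ k in F₀..F, g k * (F - k) := by
      rw [intervalIntegral.integral_of_le hle]
      exact setIntegral_congr_fun measurableSet_Ioc (fun x hx => by
        simp [max_eq_left (sub_nonneg.2 hx.2)])
    rw [h1, hsplit, hz, hmain, key]; ring
  · -- F < F₀ : call integral is 0
    have hz : (∫ k in Set.Ioi F₀, g k * max (F - k) 0) = 0 := by
      rw [setIntegral_congr_fun measurableSet_Ioi
        (g := fun _ => (0:ℝ)) (fun x hx => by
          simp [max_eq_right (sub_nonpos.2 (le_of_lt (hlt.trans hx)))])]
      simp
    have hF0le : F ≤ F₀ := hlt.le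
    have hi1 : IntervalIntegrable (fun k => g k * max (k - F) 0) volume 0 F :=
      hint1.mono_set (by
        rw [Set.uIcc_of_le hF.le, Set.uIcc_of_le hF₀.le]
        exact Set.Icc_subset_Icc le_rfl hF0le)
    have hi2 : IntervalIntegrable (fun k => g k * max (k - F) 0) volume F F₀ :=
      hint1.mono_set (by
        rw [Set.uIcc_of_le hF0le, Set.uIcc_of_le hF₀.le]
        exact Set.Icc_subset_Icc hF.le le_rfl)
    have hsplit : (∫ k in (0:ℝ)..F₀, g k * max (k - F) 0)
        = (∫ k in (0:ℝ)..F, g k * max (k - F) 0)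
          + ∫ k in F..F₀, g k * max (k - F) 0 :=
      (intervalIntegral.integral_add_adjacent_intervals hi1 hi2).symm
    have h1 : (∫ k in (0:ℝ)..F, g k * max (k - F) 0) = 0 := by
      rw [intervalIntegral.integral_congr (g := fun _ => (0:ℝ))]
      · simp
      · intro x hx
        have hx2 : x ≤ F := hx.2.trans_eq (by simp [hF.le])
        simp [max_eq_right (sub_nonpos.2 hx2)]
    have h2 : (∫ k in F..F₀, g k * max (k - F) 0) = ∫ k in F₀..F, g k * (F - k) := by
      rw [intervalIntegral.integral_symm F₀ F, ← intervalIntegral.integral_neg]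
      refine intervalIntegral.integral_congr fun x hx => ?_
      have hx1 : F ≤ x := le_trans (le_min hF0le le_rfl) hx.1
      simp only [max_eq_left (sub_nonneg.2 hx1)]
      ring
    rw [hz, hsplit, h1, h2, key]; ring
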